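/- arXiv:1401.6017 — 5 statements merged into one kernel-verified Lean document; each statement's English description precedes it below -/
import Mathlib

section
/- The function g: (0,∞) → ℝ defined piecewise by g(t) = 0 for 0 < t < 3/π², g(t) = (6/(π²t²))·log(π²t/3) for 3/π² < t < 12/π², and g(t) = (12/(π²t²))·log(2/(1 + √(1 − 12/(π²t)))) for t > 12/π², is a probability density: g ≥ 0 and ∫₀^∞ g(t) dt = 1. -/
open MeasureTheory

/-- The limiting spacing density `g` for the radial projection of the visible
points of the integer lattice: `g t = 0` on `(0, 3/π²]`,
`g t = (6/(π²t²)) * log (π²t/3)` on `(3/π², 12/π²)`, and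
`g t = (12/(π²t²)) * log (2 / (1 + √(1 - 12/(π²t))))` on `[12/π², ∞)`. -/
noncomputable def g (t : ℝ) : ℝ :=
  if t ≤ 3 / Real.pi ^ 2 then 0
  else if t < 12 / Real.pi ^ 2 then
    6 / (Real.pi ^ 2 * t ^ 2) * Real.log (Real.pi ^ 2 * t / 3)
  else
    12 / (Real.pi ^ 2 * t ^ 2) *
      Real.log (2 / (1 + Real.sqrt (1 - 12 / (Real.pi ^ 2 * t))))

noncomputable def gMid (t : ℝ) : ℝ :=
  6 / (Real.pi ^ 2 * t ^ 2) * Real.log (Real.pi ^ 2 * t / 3)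

noncomputable def gF (t : ℝ) : ℝ :=
  -(6 / Real.pi ^ 2) * (Real.log (Real.pi ^ 2 * t / 3) + 1) / t

noncomputable def gPsi (v : ℝ) : ℝ :=
  v ^ 2 * Real.log (2 / (1 + v)) + v ^ 2 / 2 - v + Real.log (1 + v)

noncomputable def gG (t : ℝ) : ℝ :=
  gPsi (Real.sqrt (1 - 12 / (Real.pi ^ 2 * t)))

lemma pi_sq_pos : (0:ℝ) < Real.pi ^ 2 := by positivity

lemma hasDerivAt_gPsi {v : ℝ} (hv : -1 < v) :
    HasDerivAt gPsi (2 * v * Real.log (2 / (1 + v))) v := by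
  have h1v : (0:ℝ) < 1 + v := by linarith
  have hphi : HasDerivAt (fun w => w ^ 2 * (Real.log 2 - Real.log (1 + w)) + w ^ 2 / 2 - w
      + Real.log (1 + w))
      (2 * v * (Real.log 2 - Real.log (1 + v)) + v ^ 2 * (0 - 1 / (1 + v)) + 2 * v / 2 - 1
        + 1 / (1 + v)) v := by
    have hlog : HasDerivAt (fun w : ℝ => Real.log (1 + w)) (1 / (1 + v)) v := by
      have := ((hasDerivAt_id v).const_add 1).log h1v.ne'
      simpa using this
    have hsq : HasDerivAt (fun w : ℝ => w ^ 2) (2 * v) v := by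
      simpa using hasDerivAt_pow 2 v
    exact (((hsq.mul ((hasDerivAt_const v (Real.log 2)).sub hlog)).add
      (hsq.div_const 2)).sub (hasDerivAt_id v)).add hlog
  have heq : gPsi =ᶠ[nhds v] (fun w => w ^ 2 * (Real.log 2 - Real.log (1 + w)) + w ^ 2 / 2 - w
      + Real.log (1 + w)) := by
    filter_upwards [eventually_gt_nhds hv] with w hw
    have h1w : (0:ℝ) < 1 + w := by linarith
    unfold gPsi
    rw [Real.log_div two_ne_zero h1w.ne']
  have := hphi.congr_of_eventuallyEq heq
  refine this.congr_deriv ?_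
  rw [Real.log_div two_ne_zero h1v.ne']
  field_simp
  ring

lemma hasDerivAt_gF {t : ℝ} (ht : 0 < t) : HasDerivAt gF (gMid t) t := by
  have hpi := pi_sq_pos
  have harg : (0:ℝ) < Real.pi ^ 2 * t / 3 := by positivity
  have hlog : HasDerivAt (fun s : ℝ => Real.log (Real.pi ^ 2 * s / 3))
      ((Real.pi ^ 2 / 3) / (Real.pi ^ 2 * t / 3)) t := by
    have h1 : HasDerivAt (fun s : ℝ => Real.pi ^ 2 * s / 3) (Real.pi ^ 2 / 3) t := by
      simpa using (((hasDerivAt_id t).const_mul (Real.pi ^ 2)).div_const 3)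
    exact h1.log harg.ne'
  have h2 : HasDerivAt (fun s : ℝ => -(6 / Real.pi ^ 2) * (Real.log (Real.pi ^ 2 * s / 3) + 1))
      (-(6 / Real.pi ^ 2) * ((Real.pi ^ 2 / 3) / (Real.pi ^ 2 * t / 3))) t :=
    (hlog.add_const 1).const_mul _
  have h3 := h2.div (hasDerivAt_id t) ht.ne'
  have : gF = fun s => -(6 / Real.pi ^ 2) * (Real.log (Real.pi ^ 2 * s / 3) + 1) / s := rfl
  rw [this]
  refine h3.congr_deriv ?_
  unfold gMid
  simp only [id]
  field_simp
  ring

lemma hasDerivAt_gG {t : ℝ} (ht : 12 / Real.pi ^ 2 < t) :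
    HasDerivAt gG (12 / (Real.pi ^ 2 * t ^ 2) *
      Real.log (2 / (1 + Real.sqrt (1 - 12 / (Real.pi ^ 2 * t))))) t := by
  have hpi := pi_sq_pos
  have ht0 : 0 < t := lt_trans (by positivity) ht
  have hlt : 12 / (Real.pi ^ 2 * t) < 1 := by
    rw [div_lt_one (by positivity)]
    calc (12:ℝ) = Real.pi ^ 2 * (12 / Real.pi ^ 2) := by field_simp
    _ < Real.pi ^ 2 * t := by exact (mul_lt_mul_iff_right₀ hpi).2 ht
  have hu : (0:ℝ) < 1 - 12 / (Real.pi ^ 2 * t) := by linarith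
  set v := Real.sqrt (1 - 12 / (Real.pi ^ 2 * t)) with hvdef
  have hv0 : 0 < v := Real.sqrt_pos.2 hu
  have hv2 : v ^ 2 = 1 - 12 / (Real.pi ^ 2 * t) := Real.sq_sqrt hu.le
  have hinner : HasDerivAt (fun s : ℝ => 1 - 12 / (Real.pi ^ 2 * s))
      (12 / (Real.pi ^ 2 * t ^ 2)) t := by
    have h1 : HasDerivAt (fun s : ℝ => Real.pi ^ 2 * s) (Real.pi ^ 2) t := by
      simpa using (hasDerivAt_id t).const_mul (Real.pi ^ 2)
    have h2 := (h1.inv (by positivity)).const_mul (12:ℝ)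
    have h3 := h2.const_sub 1
    have hfun : (fun x : ℝ => 1 - 12 * (Real.pi ^ 2 * x)⁻¹)
        = fun s => 1 - 12 / (Real.pi ^ 2 * s) := by
      funext x; rw [div_eq_mul_inv]
    simp only [Pi.inv_apply] at h3
    rw [hfun] at h3
    refine h3.congr_deriv ?_
    field_simp
  have hsqrt : HasDerivAt (fun s : ℝ => Real.sqrt (1 - 12 / (Real.pi ^ 2 * s)))
      (1 / (2 * v) * (12 / (Real.pi ^ 2 * t ^ 2))) t :=
    (Real.hasDerivAt_sqrt hu.ne').comp t hinner
  have hpsi : HasDerivAt gPsi (2 * v * Real.log (2 / (1 + v))) v :=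
    hasDerivAt_gPsi (by linarith)
  have := hpsi.comp t hsqrt
  refine this.congr_deriv ?_
  field_simp

lemma continuousAt_gMid {t : ℝ} (ht : 0 < t) : ContinuousAt gMid t := by
  unfold gMid
  have hpi := pi_sq_pos
  apply ContinuousAt.mul
  · exact continuousAt_const.div (by fun_prop) (by positivity)
  · exact (Real.continuousAt_log (by positivity)).comp (by fun_prop)

lemma g_nonneg : ∀ t : ℝ, 0 ≤ g t := by
  have hpi := pi_sq_pos
  have ha : (0:ℝ) < 3 / Real.pi ^ 2 := by positivity
  intro t
  unfold g
  split_ifs with h1 h2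
  · exact le_refl _
  · push_neg at h1
    have ht0 : 0 < t := lt_trans ha h1
    have h : (1:ℝ) ≤ Real.pi ^ 2 * t / 3 := by
      rw [le_div_iff₀ (by norm_num : (0:ℝ) < 3)]
      calc (1:ℝ) * 3 = Real.pi ^ 2 * (3 / Real.pi ^ 2) := by field_simp
      _ ≤ Real.pi ^ 2 * t := by exact (mul_le_mul_iff_right₀ hpi).2 h1.le
    exact mul_nonneg (by positivity) (Real.log_nonneg h)
  · push_neg at h1 h2
    have ht0 : 0 < t := lt_trans ha h1
    have hv0 : 0 ≤ Real.sqrt (1 - 12 / (Real.pi ^ 2 * t)) := Real.sqrt_nonneg _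
    have hv1 : Real.sqrt (1 - 12 / (Real.pi ^ 2 * t)) ≤ 1 := by
      have h12 : 1 - 12 / (Real.pi ^ 2 * t) ≤ 1 := by
        have : 0 ≤ 12 / (Real.pi ^ 2 * t) := by positivity
        linarith
      calc Real.sqrt (1 - 12 / (Real.pi ^ 2 * t)) ≤ Real.sqrt 1 := Real.sqrt_le_sqrt h12
      _ = 1 := Real.sqrt_one
    have h : (1:ℝ) ≤ 2 / (1 + Real.sqrt (1 - 12 / (Real.pi ^ 2 * t))) := by
      rw [le_div_iff₀ (by linarith)]
      linarith
    exact mul_nonneg (by positivity) (Real.log_nonneg h)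

set_option maxHeartbeats 1000000 in
/-- `g` is a probability density: it is nonnegative and integrates to 1. -/
theorem g_is_probability_density :
    (∀ t : ℝ, 0 ≤ g t) ∧ ∫ t in Set.Ioi (0 : ℝ), g t = 1 := by
  have hpi := pi_sq_pos
  have hpine : Real.pi ≠ 0 := Real.pi_ne_zero
  have ha : (0:ℝ) < 3 / Real.pi ^ 2 := by positivity
  have hb : (0:ℝ) < 12 / Real.pi ^ 2 := by positivity
  have hab : 3 / Real.pi ^ 2 < 12 / Real.pi ^ 2 := by gcongr <;> norm_num
  refine ⟨g_nonneg, ?_⟩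
  -- g agrees with gMid on Ioc a b
  have hmid_eq : ∀ t ∈ Set.Ioc (3 / Real.pi ^ 2) (12 / Real.pi ^ 2), g t = gMid t := by
    intro t ht
    unfold g
    rw [if_neg (not_le.2 ht.1)]
    rcases lt_or_eq_of_le ht.2 with h | h
    · rw [if_pos h]; rfl
    · rw [if_neg (by rw [h]; exact lt_irrefl _)]
      rw [h]
      have hz : 1 - 12 / (Real.pi ^ 2 * (12 / Real.pi ^ 2)) = 0 := by field_simp; norm_num
      have h4 : Real.pi ^ 2 * (12 / Real.pi ^ 2) / 3 = 4 := by field_simp; ring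
      unfold gMid
      rw [hz, Real.sqrt_zero, h4]
      have hlog4 : Real.log 4 = 2 * Real.log 2 := by
        rw [show (4:ℝ) = 2 ^ 2 by norm_num, Real.log_pow]
        push_cast; ring
      norm_num [hlog4]
      ring
  -- zero piece
  have hzero_eq : Set.EqOn g 0 (Set.Ioc (0:ℝ) (3 / Real.pi ^ 2)) := by
    intro t ht
    simp only [g, if_pos ht.2, Pi.zero_apply]
  have hInt0 : IntegrableOn g (Set.Ioc (0:ℝ) (3 / Real.pi ^ 2)) := by
    exact (integrableOn_zero).congr_fun (fun t ht => (hzero_eq ht).symm) measurableSet_Ioc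
  have hI0 : ∫ t in Set.Ioc (0:ℝ) (3 / Real.pi ^ 2), g t = 0 := by
    rw [setIntegral_congr_fun measurableSet_Ioc hzero_eq]
    simp
  -- middle piece
  have hcontMid : ContinuousOn gMid (Set.Icc (3 / Real.pi ^ 2) (12 / Real.pi ^ 2)) := by
    intro t ht
    exact (continuousAt_gMid (lt_of_lt_of_le ha ht.1)).continuousWithinAt
  have hIntMid : IntegrableOn g (Set.Ioc (3 / Real.pi ^ 2) (12 / Real.pi ^ 2)) := by
    exact (hcontMid.integrableOn_Icc.mono_set Set.Ioc_subset_Icc_self).congr_fun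
      (fun t ht => (hmid_eq t ht).symm) measurableSet_Ioc
  have hIMid : ∫ t in Set.Ioc (3 / Real.pi ^ 2) (12 / Real.pi ^ 2), g t
      = gF (12 / Real.pi ^ 2) - gF (3 / Real.pi ^ 2) := by
    rw [setIntegral_congr_fun measurableSet_Ioc hmid_eq,
      ← intervalIntegral.integral_of_le hab.le]
    apply intervalIntegral.integral_eq_sub_of_hasDerivAt
    · intro x hx
      rw [Set.uIcc_of_le hab.le] at hx
      exact hasDerivAt_gF (lt_of_lt_of_le ha hx.1)
    · apply ContinuousOn.intervalIntegrable
      rwa [Set.uIcc_of_le hab.le]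
  -- tail piece
  have hGb : gG (12 / Real.pi ^ 2) = 0 := by
    unfold gG
    have hz : 1 - 12 / (Real.pi ^ 2 * (12 / Real.pi ^ 2)) = 0 := by field_simp; norm_num
    rw [hz, Real.sqrt_zero]
    norm_num [gPsi]
  have hpsi0 : gPsi 0 = 0 := by norm_num [gPsi]
  have hGcont : ContinuousWithinAt gG (Set.Ici (12 / Real.pi ^ 2)) (12 / Real.pi ^ 2) := by
    apply ContinuousAt.continuousWithinAt
    have h1 : ContinuousAt (fun t : ℝ => 1 - 12 / (Real.pi ^ 2 * t)) (12 / Real.pi ^ 2) :=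
      continuousAt_const.sub (continuousAt_const.div (by fun_prop) (by positivity))
    have hz : 1 - 12 / (Real.pi ^ 2 * (12 / Real.pi ^ 2)) = 0 := by field_simp; norm_num
    have h2' : ContinuousAt gPsi 0 := (hasDerivAt_gPsi (by norm_num)).continuousAt
    have h3 : Filter.Tendsto (fun t : ℝ => Real.sqrt (1 - 12 / (Real.pi ^ 2 * t)))
        (nhds (12 / Real.pi ^ 2)) (nhds 0) := by
      have hsq : Filter.Tendsto Real.sqrt
          (nhds (1 - 12 / (Real.pi ^ 2 * (12 / Real.pi ^ 2))))
          (nhds (Real.sqrt (1 - 12 / (Real.pi ^ 2 * (12 / Real.pi ^ 2))))) :=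
        Real.continuous_sqrt.continuousAt
      have := hsq.comp h1
      rwa [hz, Real.sqrt_zero] at this
    have htd := h2'.tendsto.comp h3
    unfold ContinuousAt
    rw [hGb, ← hpsi0]
    exact htd
  have hGtend : Filter.Tendsto gG Filter.atTop (nhds (Real.log 2 - 1/2)) := by
    have h1 : Filter.Tendsto (fun t : ℝ => 12 / (Real.pi ^ 2 * t)) Filter.atTop (nhds 0) :=
      Filter.Tendsto.div_atTop tendsto_const_nhds
        (Filter.Tendsto.const_mul_atTop hpi Filter.tendsto_id)
    have h2 : Filter.Tendsto (fun t : ℝ => 1 - 12 / (Real.pi ^ 2 * t)) Filter.atTop (nhds 1) :=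
      by simpa using tendsto_const_nhds.sub h1
    have h3 := (Real.continuous_sqrt.continuousAt (x := (1:ℝ))).tendsto.comp h2
    have h4 : ContinuousAt gPsi 1 := (hasDerivAt_gPsi (by norm_num)).continuousAt
    have h5 := (Real.sqrt_one ▸ h4.tendsto).comp h3
    have hpsi1 : gPsi 1 = Real.log 2 - 1/2 := by
      unfold gPsi
      rw [show (2:ℝ)/(1+1) = 1 by norm_num, Real.log_one, show (1:ℝ)+1 = 2 by norm_num]
      ring
    rw [Real.sqrt_one, hpsi1] at h5
    exact h5
  have hderivTail : ∀ x ∈ Set.Ioi (12 / Real.pi ^ 2), HasDerivAt gG (g x) x := by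
    intro x hx
    have hx' : 12 / Real.pi ^ 2 < x := hx
    have hgx : g x = 12 / (Real.pi ^ 2 * x ^ 2) *
        Real.log (2 / (1 + Real.sqrt (1 - 12 / (Real.pi ^ 2 * x)))) := by
      unfold g
      rw [if_neg (not_le.2 (lt_trans hab hx')), if_neg (not_lt.2 hx'.le)]
    rw [hgx]
    exact hasDerivAt_gG hx'
  have hITail : ∫ t in Set.Ioi (12 / Real.pi ^ 2), g t
      = Real.log 2 - 1/2 - gG (12 / Real.pi ^ 2) :=
    integral_Ioi_of_hasDerivAt_of_nonneg hGcont hderivTail (fun x _ => g_nonneg x) hGtend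
  have hIntTail : IntegrableOn g (Set.Ioi (12 / Real.pi ^ 2)) :=
    integrableOn_Ioi_deriv_of_nonneg hGcont hderivTail (fun x _ => g_nonneg x) hGtend
  -- splitting
  have hsplit2 : ∫ t in Set.Ioi (3 / Real.pi ^ 2), g t
      = (∫ t in Set.Ioc (3 / Real.pi ^ 2) (12 / Real.pi ^ 2), g t)
        + ∫ t in Set.Ioi (12 / Real.pi ^ 2), g t := by
    rw [← Set.Ioc_union_Ioi_eq_Ioi hab.le,
      setIntegral_union Set.Ioc_disjoint_Ioi_same measurableSet_Ioi hIntMid hIntTail]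
  have hIntIoiA : IntegrableOn g (Set.Ioi (3 / Real.pi ^ 2)) := by
    rw [← Set.Ioc_union_Ioi_eq_Ioi hab.le]
    exact hIntMid.union hIntTail
  have hsplit1 : ∫ t in Set.Ioi (0:ℝ), g t
      = (∫ t in Set.Ioc (0:ℝ) (3 / Real.pi ^ 2), g t)
        + ∫ t in Set.Ioi (3 / Real.pi ^ 2), g t := by
    rw [← Set.Ioc_union_Ioi_eq_Ioi ha.le,
      setIntegral_union Set.Ioc_disjoint_Ioi_same measurableSet_Ioi hInt0 hIntIoiA]
  rw [hsplit1, hI0, hsplit2, hIMid, hITail, hGb]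
  -- final arithmetic
  have h4 : Real.pi ^ 2 * (12 / Real.pi ^ 2) / 3 = 4 := by field_simp; ring
  have h1 : Real.pi ^ 2 * (3 / Real.pi ^ 2) / 3 = 1 := by field_simp
  have hlog4 : Real.log 4 = 2 * Real.log 2 := by
    rw [show (4:ℝ) = 2 ^ 2 by norm_num, Real.log_pow]
    push_cast; ring
  unfold gF
  rw [h4, h1, hlog4, Real.log_one]
  field_simp
  ring
end

section
/- The density g vanishes identically on the interval (0, 3/π²) and is strictly positive for every t > 3/π² (with t ≠ 12/π² where it is defined piecewise but also positive); that is, the spacing distribution of visible lattice points of ℤ² has a gap of size exactly 3/π² at the origin. -/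
/-- `g` vanishes identically on `(0, 3/π²)` and is strictly positive for every
`t > 3/π²`: the spacing distribution has a gap of size exactly `3/π²`. -/
theorem g_gap :
    (∀ t ∈ Set.Ioo (0 : ℝ) (3 / Real.pi ^ 2), g t = 0) ∧
    (∀ t : ℝ, 3 / Real.pi ^ 2 < t → 0 < g t) := by
  have hpi : (0 : ℝ) < Real.pi ^ 2 := by positivity
  constructor
  · intro t ht
    simp [g, le_of_lt ht.2]
  · intro t ht
    have ht0 : 0 < t := lt_trans (by positivity) ht
    have hnle : ¬ t ≤ 3 / Real.pi ^ 2 := not_le.mpr ht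
    have hc : 0 < 6 / (Real.pi ^ 2 * t ^ 2) := by positivity
    by_cases h12 : t < 12 / Real.pi ^ 2
    · rw [g, if_neg hnle, if_pos h12]
      apply mul_pos hc
      apply Real.log_pos
      rw [lt_div_iff₀ (by norm_num)]
      rw [div_lt_iff₀ hpi] at ht
      linarith [ht]
    · rw [g, if_neg hnle, if_neg h12]
      have h12' : 12 / Real.pi ^ 2 ≤ t := not_lt.mp h12
      have hpt : 0 < Real.pi ^ 2 * t := by positivity
      have hfrac : 0 < 12 / (Real.pi ^ 2 * t) := by positivity
      have harg : 1 - 12 / (Real.pi ^ 2 * t) < 1 := by linarith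
      have hs : Real.sqrt (1 - 12 / (Real.pi ^ 2 * t)) < 1 :=
        (Real.sqrt_lt' one_pos).mpr (by rw [one_pow]; linarith)
      have hsn : 0 ≤ Real.sqrt (1 - 12 / (Real.pi ^ 2 * t)) := Real.sqrt_nonneg _
      have hden : 0 < 1 + Real.sqrt (1 - 12 / (Real.pi ^ 2 * t)) := by linarith
      have : (1 : ℝ) < 2 / (1 + Real.sqrt (1 - 12 / (Real.pi ^ 2 * t))) := by
        rw [lt_div_iff₀ hden]; linarith
      have hc2 : 0 < 12 / (Real.pi ^ 2 * t ^ 2) := by positivity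
      exact mul_pos hc2 (Real.log_pos this)
end

section
/- The tail of the density g decays like an inverse cube: lim_{t → ∞} t³·g(t) = 36/π⁴. -/
open Filter

lemma f_hasDeriv :
    HasDerivAt (fun u : ℝ => Real.log (2 / (1 + Real.sqrt (1 - u)))) (1/4) 0 := by
  have h1 : HasDerivAt (fun u : ℝ => 1 - u) (-1) 0 := by
    simpa using (hasDerivAt_id (0:ℝ)).const_sub 1
  have h2 : HasDerivAt (fun u : ℝ => Real.sqrt (1 - u)) (-(1/2)) 0 := by
    have := h1.sqrt (by norm_num : (1:ℝ) - 0 ≠ 0)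
    convert this using 1
    norm_num [Real.sqrt_one]
  have h3 : HasDerivAt (fun u : ℝ => 1 + Real.sqrt (1 - u)) (-(1/2)) 0 := by
    simpa using h2.const_add 1
  have h4 : HasDerivAt (fun u : ℝ => Real.log (1 + Real.sqrt (1 - u))) (-(1/4)) 0 := by
    have hne : (1:ℝ) + Real.sqrt (1 - 0) ≠ 0 := by
      norm_num [Real.sqrt_one]
    have := h3.log hne
    norm_num [Real.sqrt_one] at this
    convert this using 1
  have h5 : HasDerivAt (fun u : ℝ => Real.log 2 - Real.log (1 + Real.sqrt (1 - u)))
      (1/4) 0 := by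
    simpa using h4.const_sub (Real.log 2)
  have heq : (fun u : ℝ => Real.log (2 / (1 + Real.sqrt (1 - u)))) =
      fun u : ℝ => Real.log 2 - Real.log (1 + Real.sqrt (1 - u)) := by
    funext u
    have hpos : (0:ℝ) < 1 + Real.sqrt (1 - u) := by positivity
    rw [Real.log_div (by norm_num) hpos.ne']
  rw [heq]
  exact h5

/-- The tail of `g` decays like an inverse cube: `t³ * g t → 36/π⁴` as `t → ∞`. -/
theorem g_tail_decay :
    Tendsto (fun t : ℝ => t ^ 3 * g t) atTop (nhds (36 / Real.pi ^ 4)) := by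
  have hπ : (0:ℝ) < Real.pi := Real.pi_pos
  set f : ℝ → ℝ := fun u => Real.log (2 / (1 + Real.sqrt (1 - u))) with hf
  have hslope : Tendsto (slope f 0) (nhdsWithin 0 {(0:ℝ)}ᶜ) (nhds (1/4)) :=
    hasDerivAt_iff_tendsto_slope.mp f_hasDeriv
  -- u t = 12/(π² t) tends to 0 within the punctured neighborhood
  have hu0 : Tendsto (fun t : ℝ => 12 / (Real.pi ^ 2 * t)) atTop (nhds 0) := by
    apply Tendsto.div_atTop tendsto_const_nhds
    exact Tendsto.const_mul_atTop (by positivity) tendsto_id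
  have hu : Tendsto (fun t : ℝ => 12 / (Real.pi ^ 2 * t)) atTop
      (nhdsWithin 0 {(0:ℝ)}ᶜ) := by
    apply tendsto_nhdsWithin_of_tendsto_nhds_of_eventually_within _ hu0
    filter_upwards [eventually_gt_atTop (0:ℝ)] with t ht
    have : 0 < 12 / (Real.pi ^ 2 * t) := by positivity
    exact this.ne'
  have hcomp : Tendsto (fun t : ℝ => (144 / Real.pi ^ 4) *
      slope f 0 (12 / (Real.pi ^ 2 * t))) atTop
      (nhds ((144 / Real.pi ^ 4) * (1/4))) :=
    (hslope.comp hu).const_mul _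
  have hlim : (144 / Real.pi ^ 4) * (1/4) = 36 / Real.pi ^ 4 := by ring
  rw [hlim] at hcomp
  refine hcomp.congr' ?_
  filter_upwards [eventually_ge_atTop (12 / Real.pi ^ 2), eventually_gt_atTop (0:ℝ)]
    with t ht ht0
  have h3 : ¬ t ≤ 3 / Real.pi ^ 2 := by
    push_neg
    calc 3 / Real.pi ^ 2 < 12 / Real.pi ^ 2 := by
          apply (div_lt_div_iff_of_pos_right (by positivity)).mpr; norm_num
      _ ≤ t := ht
  have h12 : ¬ t < 12 / Real.pi ^ 2 := not_lt.mpr ht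
  have hf0 : f 0 = 0 := by
    show Real.log (2 / (1 + Real.sqrt (1 - 0))) = 0
    norm_num [Real.sqrt_one]
  simp only [g, h3, h12, if_false, if_true, ite_false]
  rw [slope_def_field, hf0, sub_zero]
  simp only [hf]
  field_simp
  ring
end

section
/- For every integer k ≥ 2, the k-th moment of the density g does not exist: ∫₀^∞ t^k·g(t) dt = ∞. -/
open MeasureTheory

lemma log_bound (x : ℝ) (hx0 : 0 < x) (hx1 : x ≤ 1) :
    x / 4 ≤ Real.log (2 / (1 + Real.sqrt (1 - x))) := by
  set u := Real.sqrt (1 - x) with hu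
  have hu0 : 0 ≤ u := Real.sqrt_nonneg _
  have hu1 : u ≤ 1 := Real.sqrt_le_one.2 (by linarith)
  have husq : u ^ 2 = 1 - x := Real.sq_sqrt (by linarith)
  have hpos : 0 < (1 + u) / 2 := by linarith
  have hlog : Real.log ((1 + u) / 2) ≤ (1 + u) / 2 - 1 :=
    Real.log_le_sub_one_of_pos hpos
  have h2 : Real.log (2 / (1 + u)) = - Real.log ((1 + u) / 2) := by
    rw [← Real.log_inv]; congr 1; field_simp
  rw [h2]
  nlinarith [hlog, husq]

lemma inv_lintegral_top (a c : ℝ) (ha : 0 < a) (hc : 0 < c) :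
    ∫⁻ t in Set.Ioi a, ENNReal.ofReal (c * t⁻¹) = ⊤ := by
  by_contra h
  have hint : IntegrableOn (fun t => c * t⁻¹) (Set.Ioi a) := by
    constructor
    · exact (measurable_const.mul measurable_inv).aestronglyMeasurable
    · rw [hasFiniteIntegral_iff_ofReal]
      · exact lt_top_iff_ne_top.2 h
      · filter_upwards [ae_restrict_mem measurableSet_Ioi] with t ht
        have ht0 : 0 < t := ha.trans ht
        positivity
  have h1 : IntegrableOn (fun t : ℝ => t⁻¹) (Set.Ioi a) := by
    have := hint.const_mul c⁻¹
    exact (by simpa [← mul_assoc, inv_mul_cancel₀ hc.ne'] using this :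
      Integrable (fun t : ℝ => t⁻¹) (volume.restrict (Set.Ioi a)))
  have h2 : IntegrableOn (fun t : ℝ => t ^ (-1 : ℝ)) (Set.Ioi a) := by
    apply h1.congr_fun ?_ measurableSet_Ioi
    intro t ht
    simp [Real.rpow_neg_one]
  rw [integrableOn_Ioi_rpow_iff ha] at h2
  linarith

/-- For every integer `k ≥ 2` the `k`-th moment of `g` does not exist
(the integral is infinite). -/
theorem g_moments_infinite (k : ℕ) (hk : 2 ≤ k) :
    ∫⁻ t in Set.Ioi (0 : ℝ), ENNReal.ofReal (t ^ k * g t) = ⊤ := by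
  have hpi : 0 < Real.pi := Real.pi_pos
  have hpi2 : 0 < Real.pi ^ 2 := by positivity
  set a : ℝ := 12 / Real.pi ^ 2 with ha_def
  have ha1 : 1 < a := by
    rw [ha_def, lt_div_iff₀ hpi2]
    nlinarith [Real.pi_lt_d2]
  have ha0 : 0 < a := by linarith
  set c : ℝ := 36 / Real.pi ^ 4 with hc_def
  have hc0 : 0 < c := by positivity
  have key : ∀ t ∈ Set.Ioi a, c * t⁻¹ ≤ t ^ k * g t := by
    intro t ht
    rw [Set.mem_Ioi] at ht
    have ht1 : 1 < t := ha1.trans ht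
    have ht0 : 0 < t := by linarith
    set x : ℝ := 12 / (Real.pi ^ 2 * t) with hx_def
    have hx0 : 0 < x := by positivity
    have h12 : (12 : ℝ) ≤ Real.pi ^ 2 * t := by
      have h : Real.pi ^ 2 * a = 12 := by rw [ha_def]; field_simp
      nlinarith
    have hx1 : x ≤ 1 := by
      rw [hx_def, div_le_one (by positivity)]
      exact h12
    have hgt : g t = 12 / (Real.pi ^ 2 * t ^ 2) *
        Real.log (2 / (1 + Real.sqrt (1 - x))) := by
      rw [g, if_neg, if_neg]
      · exact not_lt.2 (le_of_lt ht)
      · push_neg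
        rw [div_lt_iff₀ hpi2]
        nlinarith
    have hlog := log_bound x hx0 hx1
    have hlog0 : 0 ≤ Real.log (2 / (1 + Real.sqrt (1 - x))) := by linarith
    have hg0 : 0 ≤ g t := by
      rw [hgt]; positivity
    have step1 : c * t⁻¹ ≤ t ^ 2 * g t := by
      rw [hgt]
      have heq : t ^ 2 * (12 / (Real.pi ^ 2 * t ^ 2) *
          Real.log (2 / (1 + Real.sqrt (1 - x)))) =
          12 / Real.pi ^ 2 * Real.log (2 / (1 + Real.sqrt (1 - x))) := by
        field_simp
      rw [heq]
      have heq2 : c * t⁻¹ = 12 / Real.pi ^ 2 * (x / 4) := by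
        rw [hc_def, hx_def]; field_simp; ring
      rw [heq2]
      exact mul_le_mul_of_nonneg_left hlog (by positivity)
    have step2 : t ^ 2 * g t ≤ t ^ k * g t :=
      mul_le_mul_of_nonneg_right (pow_le_pow_right₀ ht1.le hk) hg0
    linarith
  refine top_le_iff.1 ?_
  calc (⊤ : ENNReal) = ∫⁻ t in Set.Ioi a, ENNReal.ofReal (c * t⁻¹) :=
        (inv_lintegral_top a c ha0 hc0).symm
    _ ≤ ∫⁻ t in Set.Ioi a, ENNReal.ofReal (t ^ k * g t) := by
        apply setLIntegral_mono' measurableSet_Ioi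
        intro t ht
        exact ENNReal.ofReal_le_ofReal (key t ht)
    _ ≤ ∫⁻ t in Set.Ioi (0 : ℝ), ENNReal.ofReal (t ^ k * g t) :=
        lintegral_mono_set (Set.Ioi_subset_Ioi ha0.le)
end

section
/- The polynomial X⁴ − 5X² + 5 is irreducible over ℚ, and both of its positive real roots, √((5 + √5)/2) and √((5 − √5)/2), are strictly greater than 1. Consequently the Lançon–Billard inflation multiplier λ = √((5 + √5)/2) is an algebraic integer of degree 4 over ℚ that is not a Pisot number: it has an algebraic conjugate other than itself of absolute value greater than 1. -/
open Polynomial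

noncomputable def fZ : ℤ[X] := X ^ 4 - C 5 * X ^ 2 + C 5

lemma fZ_natDegree : fZ.natDegree = 4 := by
  unfold fZ; compute_degree!

lemma fZ_monic : fZ.Monic := by
  unfold fZ; monicity!

lemma fZ_irred : Irreducible fZ := by
  have hprime : Prime (5 : ℤ) := by norm_num
  have hP : (Ideal.span {(5:ℤ)}).IsPrime :=
    (Ideal.span_singleton_prime (by norm_num)).mpr hprime
  have hE : fZ.IsEisensteinAt (Ideal.span {(5:ℤ)}) := by
    constructor
    · rw [fZ_monic.leadingCoeff, Ideal.mem_span_singleton]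
      norm_num
    · intro n hn
      rw [fZ_natDegree] at hn
      interval_cases n <;>
        simp [fZ, coeff_X_pow, Ideal.mem_span_singleton, dvd_refl]
    · rw [Ideal.span_singleton_pow, Ideal.mem_span_singleton]
      simp [fZ, coeff_X_pow]
  exact hE.irreducible hP fZ_monic.isPrimitive (by rw [fZ_natDegree]; norm_num)

lemma fQ_eq : fZ.map (algebraMap ℤ ℚ) = (X ^ 4 - C 5 * X ^ 2 + C 5 : ℚ[X]) := by
  simp [fZ, Polynomial.map_add, Polynomial.map_sub, Polynomial.map_mul,
    Polynomial.map_pow, Polynomial.map_C, Polynomial.map_X]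
  rw [map_ofNat C 5]

lemma fQ_irred : Irreducible (X ^ 4 - C 5 * X ^ 2 + C 5 : ℚ[X]) := by
  rw [← fQ_eq]
  exact (fZ_monic.isPrimitive.irreducible_iff_irreducible_map_fraction_map).mp fZ_irred

lemma sqrt5_sq : (Real.sqrt 5) ^ 2 = 5 := Real.sq_sqrt (by norm_num)
lemma sqrt5_nonneg : 0 ≤ Real.sqrt 5 := Real.sqrt_nonneg 5
lemma sqrt5_lt3 : Real.sqrt 5 < 3 := by
  nlinarith [sqrt5_sq, sqrt5_nonneg]

lemma root_plus : aeval (Real.sqrt ((5 + Real.sqrt 5) / 2))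
    (X ^ 4 - C 5 * X ^ 2 + C 5 : ℚ[X]) = 0 := by
  set s := Real.sqrt 5
  set a := Real.sqrt ((5 + s) / 2)
  have ha2 : a ^ 2 = (5 + s) / 2 := Real.sq_sqrt (by positivity)
  simp only [map_add, map_sub, map_mul, map_pow, aeval_X, aeval_C]
  norm_num
  linear_combination (a ^ 2 + (5 + s) / 2 - 5) * ha2 + (1/4) * sqrt5_sq

lemma root_minus : aeval (Real.sqrt ((5 - Real.sqrt 5) / 2))
    (X ^ 4 - C 5 * X ^ 2 + C 5 : ℚ[X]) = 0 := by
  set s := Real.sqrt 5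
  set a := Real.sqrt ((5 - s) / 2)
  have ha2 : a ^ 2 = (5 - s) / 2 := Real.sq_sqrt (by nlinarith [sqrt5_lt3])
  simp only [map_add, map_sub, map_mul, map_pow, aeval_X, aeval_C]
  norm_num
  linear_combination (a ^ 2 + (5 - s) / 2 - 5) * ha2 + (1/4) * sqrt5_sq

lemma gt_plus : 1 < Real.sqrt ((5 + Real.sqrt 5) / 2) := by
  rw [show (1:ℝ) = Real.sqrt 1 from (Real.sqrt_one).symm]
  apply Real.sqrt_lt_sqrt (by norm_num)
  nlinarith [sqrt5_nonneg]

lemma gt_minus : 1 < Real.sqrt ((5 - Real.sqrt 5) / 2) := by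
  rw [show (1:ℝ) = Real.sqrt 1 from (Real.sqrt_one).symm]
  apply Real.sqrt_lt_sqrt (by norm_num)
  nlinarith [sqrt5_lt3]

lemma aevalR_fZ : aeval (Real.sqrt ((5 + Real.sqrt 5) / 2)) fZ = 0 := by
  set s := Real.sqrt 5
  set a := Real.sqrt ((5 + s) / 2)
  have ha2 : a ^ 2 = (5 + s) / 2 := Real.sq_sqrt (by positivity)
  simp only [fZ, map_add, map_sub, map_mul, map_pow, aeval_X, aeval_C]
  norm_num
  linear_combination (a ^ 2 + (5 + s) / 2 - 5) * ha2 + (1/4) * sqrt5_sq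

lemma integral_lam : IsIntegral ℤ (Real.sqrt ((5 + Real.sqrt 5) / 2)) :=
  ⟨fZ, fZ_monic, by rw [← Polynomial.aeval_def]; exact aevalR_fZ⟩

lemma fQ_monic : (X ^ 4 - C 5 * X ^ 2 + C 5 : ℚ[X]).Monic := by monicity!

lemma minpoly_eq : minpoly ℚ (Real.sqrt ((5 + Real.sqrt 5) / 2))
    = (X ^ 4 - C 5 * X ^ 2 + C 5 : ℚ[X]) :=
  (minpoly.eq_of_irreducible_of_monic fQ_irred root_plus fQ_monic).symm

lemma deg4 : (minpoly ℚ (Real.sqrt ((5 + Real.sqrt 5) / 2))).natDegree = 4 := by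
  rw [minpoly_eq]; compute_degree!

lemma conj_exists : ∃ z : ℂ, z ≠ ((Real.sqrt ((5 + Real.sqrt 5) / 2) : ℝ) : ℂ) ∧
    aeval z (minpoly ℚ (Real.sqrt ((5 + Real.sqrt 5) / 2))) = 0 ∧
    1 < ‖z‖ := by
  set a := Real.sqrt ((5 + Real.sqrt 5) / 2) with ha
  have hapos : (0:ℝ) < a := lt_trans one_pos gt_plus
  refine ⟨((-a : ℝ) : ℂ), ?_, ?_, ?_⟩
  · intro h
    rw [Complex.ofReal_inj] at h
    linarith
  · rw [minpoly_eq, show ((-a:ℝ):ℂ) = algebraMap ℝ ℂ (-a) from rfl,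
      Polynomial.aeval_algebraMap_apply ℂ (-a : ℝ)]
    have : aeval (-a : ℝ) (X ^ 4 - C 5 * X ^ 2 + C 5 : ℚ[X]) = 0 := by
      have := root_plus
      simp only [map_add, map_sub, map_mul, map_pow, aeval_X, aeval_C] at this ⊢
      rw [show (-a)^4 = a^4 by ring, show (-a)^2 = a^2 by ring]
      exact this
    rw [this, map_zero]
  · rw [Complex.norm_real, Real.norm_eq_abs, abs_neg, abs_of_pos hapos]
    exact gt_plus


/-- The polynomial X⁴ − 5X² + 5 is irreducible over ℚ and has the two positive
real roots √((5+√5)/2) and √((5−√5)/2), both strictly greater than 1.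
Consequently the Lançon–Billard inflation multiplier λ = √((5+√5)/2) is an
algebraic integer of degree 4 over ℚ that is not a Pisot number: it has an
algebraic conjugate other than itself of absolute value greater than 1. -/
theorem lancon_billard_multiplier_not_pisot :
    Irreducible ((X ^ 4 - C 5 * X ^ 2 + C 5 : ℚ[X])) ∧
    aeval (Real.sqrt ((5 + Real.sqrt 5) / 2)) (X ^ 4 - C 5 * X ^ 2 + C 5 : ℚ[X]) = 0 ∧
    aeval (Real.sqrt ((5 - Real.sqrt 5) / 2)) (X ^ 4 - C 5 * X ^ 2 + C 5 : ℚ[X]) = 0 ∧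
    1 < Real.sqrt ((5 + Real.sqrt 5) / 2) ∧
    1 < Real.sqrt ((5 - Real.sqrt 5) / 2) ∧
    IsIntegral ℤ (Real.sqrt ((5 + Real.sqrt 5) / 2)) ∧
    (minpoly ℚ (Real.sqrt ((5 + Real.sqrt 5) / 2))).natDegree = 4 ∧
    ∃ z : ℂ, z ≠ ((Real.sqrt ((5 + Real.sqrt 5) / 2) : ℝ) : ℂ) ∧
      aeval z (minpoly ℚ (Real.sqrt ((5 + Real.sqrt 5) / 2))) = 0 ∧
      1 < ‖z‖ := by
  exact ⟨fQ_irred, root_plus, root_minus, gt_plus, gt_minus, integral_lam, deg4, conj_exists⟩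
end
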